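/- Let φ be the golden ratio, and define x̂ = φ³x - ε₂ and ŷ = φ³y - 2ε₁ - 3ε₂ where ε₁, ε₂ are as above (fractional offsets of φ⁻⁴x + φ⁻¹y and φ⁻³x). Then φ⁻⁴x̂ + φ⁻¹ŷ ≡ -φ⁻³ε₁ (mod ℤ). -/
import Mathlib


noncomputable def gr : ℝ := (1 + Real.sqrt 5) / 2

theorem hat_cong (x y m n : ℤ) (ε₁ ε₂ : ℝ)
    (h₁ : (gr ^ 4)⁻¹ * x + gr⁻¹ * y = (m : ℝ) + ε₁)
    (h₂ : (gr ^ 3)⁻¹ * x = (n : ℝ) + ε₂) :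
    ∃ k : ℤ,
      (gr ^ 4)⁻¹ * (gr ^ 3 * x - ε₂) + gr⁻¹ * (gr ^ 3 * y - 2 * ε₁ - 3 * ε₂)
        - (-(gr ^ 3)⁻¹ * ε₁) = (k : ℝ) := by
  have hs : Real.sqrt 5 ^ 2 = 5 := Real.sq_sqrt (by norm_num)
  have hs1 : (1:ℝ) ≤ Real.sqrt 5 := by
    nlinarith [Real.sqrt_nonneg 5]
  have hg2 : gr ^ 2 = gr + 1 := by unfold gr; nlinarith
  have hinv : gr⁻¹ = gr - 1 :=
    inv_eq_of_mul_eq_one_right (by nlinarith [hg2])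
  have h3inv : (gr ^ 3)⁻¹ = 2 * gr - 3 :=
    inv_eq_of_mul_eq_one_right (by nlinarith [hg2])
  have h4inv : (gr ^ 4)⁻¹ = 5 - 3 * gr :=
    inv_eq_of_mul_eq_one_right (by linear_combination (-3*gr^3+2*gr^2-gr+1) * hg2)
  have h3 : gr ^ 3 = 2 * gr + 1 := by nlinarith [hg2]
  simp only [hinv, h3inv, h4inv] at h₁ h₂ ⊢
  simp only [h3] at h₁ h₂ ⊢
  refine ⟨m + 2 * n + 2 * y, ?_⟩
  push_cast
  linear_combination h₁ + 2 * h₂ + (-6 * (x:ℝ) + 2 * y) * hg2
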